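/- Let F : ℝ^m → ℝ^m be C¹ with F(û) = 0 and DF(û) invertible (hyperbolic steady state in the sense that 0 is not an eigenvalue). Suppose φ^{Δt} : ℝ^m → ℝ^m is a family of C¹ maps with φ^{Δt}(u) = u + Δt F(u) + Δt R(u, Δt) where ‖R(u,Δt)‖ ≤ K Δt and ‖R(u,Δt) - R(v,Δt)‖ ≤ K Δt ‖u - v‖ uniformly for u, v in a fixed ball around û (first-order consistency with Lipschitz remainder). Then there exist Δt₀ > 0 and C > 0 such that for each 0 < Δt ≤ Δt₀, φ^{Δt} has a fixed point Û(Δt) that is unique in the ball B(û, C Δt). -/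

import Mathlib

open Metric Set Function NNReal

set_option maxHeartbeats 2000000 in
theorem stmt17 (m : ℕ) (F : (Fin m → ℝ) → (Fin m → ℝ)) (hF : ContDiff ℝ 1 F)
    (uhat : Fin m → ℝ) (hFu : F uhat = 0)
    (hinv : Function.Bijective (fderiv ℝ F uhat))
    (φ : ℝ → (Fin m → ℝ) → (Fin m → ℝ)) (hφC1 : ∀ Δt, ContDiff ℝ 1 (φ Δt))
    (R : (Fin m → ℝ) → ℝ → (Fin m → ℝ)) (K r : ℝ) (hK : 0 < K) (hr : 0 < r)
    (hform : ∀ Δt > (0 : ℝ), ∀ u, φ Δt u = u + Δt • F u + Δt • R u Δt)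
    (hRb : ∀ Δt > (0 : ℝ), ∀ u ∈ Metric.closedBall uhat r, ‖R u Δt‖ ≤ K * Δt)
    (hRL : ∀ Δt > (0 : ℝ), ∀ u ∈ Metric.closedBall uhat r,
      ∀ v ∈ Metric.closedBall uhat r, ‖R u Δt - R v Δt‖ ≤ K * Δt * ‖u - v‖) :
    ∃ Δt₀ > (0 : ℝ), ∃ C > (0 : ℝ), ∀ Δt : ℝ, 0 < Δt → Δt ≤ Δt₀ →
      ∃! U : Fin m → ℝ, U ∈ Metric.closedBall uhat (C * Δt) ∧ φ Δt U = U := by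
  classical
  set L := fderiv ℝ F uhat with hLdef
  let e : (Fin m → ℝ) ≃L[ℝ] (Fin m → ℝ) :=
    (LinearEquiv.ofBijective (L : (Fin m → ℝ) →ₗ[ℝ] (Fin m → ℝ)) hinv).toContinuousLinearEquiv
  have he : ∀ w, e w = L w := fun w => rfl
  have hesymmL : ∀ w, e.symm (L w) = w := by
    intro w
    rw [← he w]
    exact e.symm_apply_apply w
  set M := ‖(e.symm : (Fin m → ℝ) →L[ℝ] (Fin m → ℝ))‖ with hMdef
  have hM0 : 0 ≤ M := norm_nonneg _
  have hM1 : 0 < M + 1 := by linarith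
  have hMne : M + 1 ≠ 0 := ne_of_gt hM1
  have hKne : K ≠ 0 := ne_of_gt hK
  have hEb : ∀ z, ‖e.symm z‖ ≤ M * ‖z‖ := fun z =>
    (e.symm : (Fin m → ℝ) →L[ℝ] (Fin m → ℝ)).le_opNorm z
  set ε : ℝ := (4 * (M + 1))⁻¹ with hεdef
  have hε : 0 < ε := by positivity
  have hMε : M * ε ≤ 1 / 4 := by
    have h5 : (M + 1) * ε = 1 / 4 := by
      rw [hεdef]; field_simp
    nlinarith
  -- δ from continuity of the derivative
  have hcont : Continuous (fderiv ℝ F) := hF.continuous_fderiv one_ne_zero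
  obtain ⟨δ, hδ, hδ'⟩ := Metric.continuousAt_iff.mp hcont.continuousAt ε hε
  set ρ : ℝ := min (δ / 2) r with hρdef
  have hρ : 0 < ρ := lt_min (by linarith) hr
  -- mean value estimate on closedBall uhat ρ
  have hmv : ∀ u ∈ closedBall uhat ρ, ∀ v ∈ closedBall uhat ρ,
      ‖(F u - L u) - (F v - L v)‖ ≤ ε * ‖u - v‖ := by
    intro u hu v hv
    have hd : ∀ x ∈ closedBall uhat ρ, DifferentiableAt ℝ (fun x => F x - L x) x := by
      intro x _
      exact (hF.differentiable one_ne_zero x).sub (L.differentiableAt)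
    have hb : ∀ x ∈ closedBall uhat ρ, ‖fderiv ℝ (fun x => F x - L x) x‖ ≤ ε := by
      intro x hx
      have hdx : fderiv ℝ (fun x => F x - L x) x = fderiv ℝ F x - L := by
        rw [fderiv_fun_sub (hF.differentiable one_ne_zero x) L.differentiableAt, L.fderiv]
      rw [hdx]
      have hxδ : dist x uhat < δ := by
        have h0 := mem_closedBall.mp hx
        have h1 : ρ ≤ δ / 2 := min_le_left _ _
        calc dist x uhat ≤ ρ := h0
          _ ≤ δ / 2 := h1
          _ < δ := by linarith
      have h2 := hδ' hxδ
      rw [dist_eq_norm] at h2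
      exact le_of_lt h2
    have := (convex_closedBall uhat ρ).norm_image_sub_le_of_norm_fderiv_le hd hb hv hu
    simpa using this
  set C : ℝ := 2 * (M + 1) * K with hCdef
  have hC : 0 < C := by positivity
  set Δt₀ : ℝ := min (ρ / C) ((4 * (M + 1) * K)⁻¹) with hΔt₀def
  have hΔt₀ : 0 < Δt₀ := lt_min (by positivity) (by positivity)
  refine ⟨Δt₀, hΔt₀, C, hC, ?_⟩
  intro Δt hΔt hΔtle
  have hCΔρ : C * Δt ≤ ρ := by
    have h1 : Δt ≤ ρ / C := le_trans hΔtle (min_le_left _ _)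
    calc C * Δt ≤ C * (ρ / C) := by nlinarith
      _ = ρ := by field_simp
  have hMKΔ : (M + 1) * K * Δt ≤ 1 / 4 := by
    have h1 : Δt ≤ (4 * (M + 1) * K)⁻¹ := le_trans hΔtle (min_le_right _ _)
    have h2 : (M + 1) * K * (4 * (M + 1) * K)⁻¹ = 1 / 4 := by
      field_simp
    calc (M + 1) * K * Δt ≤ (M + 1) * K * ((4 * (M + 1) * K)⁻¹) :=
          mul_le_mul_of_nonneg_left h1 (by positivity)
      _ = 1 / 4 := h2
  set Φ : (Fin m → ℝ) → (Fin m → ℝ) := fun u => u - e.symm (F u + R u Δt) with hΦdef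
  have hΦapp : ∀ u, Φ u = u - e.symm (F u + R u Δt) := fun u => rfl
  have hsub : closedBall uhat (C * Δt) ⊆ closedBall uhat ρ :=
    closedBall_subset_closedBall hCΔρ
  have hsubr : closedBall uhat ρ ⊆ closedBall uhat r :=
    closedBall_subset_closedBall (min_le_right _ _)
  -- contraction estimate
  have hcontr : ∀ u ∈ closedBall uhat ρ, ∀ v ∈ closedBall uhat ρ,
      ‖Φ u - Φ v‖ ≤ (1 / 2) * ‖u - v‖ := by
    intro u hu v hv
    have harg : (F u + R u Δt) - (F v + R v Δt)
        = L (u - v) + (((F u - F v) - L (u - v)) + (R u Δt - R v Δt)) := by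
      abel
    have h1 : e.symm (F u + R u Δt) - e.symm (F v + R v Δt)
        = (u - v) + (e.symm ((F u - F v) - L (u - v)) + e.symm (R u Δt - R v Δt)) := by
      rw [← map_sub, harg, map_add, map_add, hesymmL]
    have key : Φ u - Φ v =
        -(e.symm ((F u - F v) - L (u - v)) + e.symm (R u Δt - R v Δt)) := by
      rw [hΦapp, hΦapp, sub_sub_sub_comm, h1]
      abel
    rw [key, norm_neg]
    have hE : ‖e.symm ((F u - F v) - L (u - v))‖ ≤ M * (ε * ‖u - v‖) := by
      refine le_trans (hEb _) ?_
      have h2 : (F u - F v) - L (u - v) = (F u - L u) - (F v - L v) := by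
        rw [map_sub]; abel
      rw [h2]
      exact mul_le_mul_of_nonneg_left (hmv u hu v hv) hM0
    have hR : ‖e.symm (R u Δt - R v Δt)‖ ≤ M * (K * Δt * ‖u - v‖) := by
      refine le_trans (hEb _) ?_
      exact mul_le_mul_of_nonneg_left (hRL Δt hΔt u (hsubr hu) v (hsubr hv)) hM0
    have hMK : M * (K * Δt) ≤ 1 / 4 := by nlinarith
    calc ‖e.symm ((F u - F v) - L (u - v)) + e.symm (R u Δt - R v Δt)‖
        ≤ ‖e.symm ((F u - F v) - L (u - v))‖ + ‖e.symm (R u Δt - R v Δt)‖ := norm_add_le _ _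
      _ ≤ M * (ε * ‖u - v‖) + M * (K * Δt * ‖u - v‖) := add_le_add hE hR
      _ ≤ (1 / 2) * ‖u - v‖ := by nlinarith [norm_nonneg (u - v)]
  have huhat_mem : uhat ∈ closedBall uhat (C * Δt) := by
    have : (0:ℝ) ≤ C * Δt := by positivity
    simpa using this
  -- self map
  have hmaps : MapsTo Φ (closedBall uhat (C * Δt)) (closedBall uhat (C * Δt)) := by
    intro u hu
    have h1 : ‖Φ u - Φ uhat‖ ≤ (1 / 2) * ‖u - uhat‖ :=
      hcontr u (hsub hu) uhat (hsub huhat_mem)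
    have h2 : ‖Φ uhat - uhat‖ ≤ M * (K * Δt) := by
      have h3 : Φ uhat - uhat = -(e.symm (R uhat Δt)) := by
        rw [hΦapp, hFu, zero_add]
        abel
      rw [h3, norm_neg]
      refine le_trans (hEb _) ?_
      exact mul_le_mul_of_nonneg_left (hRb Δt hΔt uhat (hsubr (hsub huhat_mem))) hM0
    have hum : ‖u - uhat‖ ≤ C * Δt := by
      rw [← dist_eq_norm]; exact mem_closedBall.mp hu
    have h4 : ‖Φ u - uhat‖ ≤ C * Δt := by
      calc ‖Φ u - uhat‖ ≤ ‖Φ u - Φ uhat‖ + ‖Φ uhat - uhat‖ := by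
            have h5 := norm_add_le (Φ u - Φ uhat) (Φ uhat - uhat)
            simpa using h5
        _ ≤ (1 / 2) * (C * Δt) + M * (K * Δt) := by
            refine add_le_add (le_trans h1 ?_) h2
            nlinarith
        _ ≤ C * Δt := by rw [hCdef]; nlinarith
    rw [mem_closedBall, dist_eq_norm]
    exact h4
  -- fixed point equivalence
  have hiff : ∀ u, φ Δt u = u ↔ Φ u = u := by
    intro u
    rw [hform Δt hΔt u]
    constructor
    · intro h
      have h0 : Δt • (F u + R u Δt) = 0 := by
        have h5 : u + Δt • F u + Δt • R u Δt - u = 0 := by rw [h]; abel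
        rw [← h5, smul_add]; abel
      have h1 : F u + R u Δt = 0 := by
        rcases smul_eq_zero.mp h0 with h | h
        · exact absurd h (ne_of_gt hΔt)
        · exact h
      rw [hΦapp, h1, map_zero, sub_zero]
    · intro h
      rw [hΦapp] at h
      have h1 : e.symm (F u + R u Δt) = 0 := sub_eq_self.mp h
      have h2 : F u + R u Δt = 0 := by
        rw [← e.apply_symm_apply (F u + R u Δt), h1, map_zero]
      rw [add_assoc, ← smul_add, h2, smul_zero, add_zero]
  -- Banach fixed point
  have hcomplete : IsComplete (closedBall uhat (C * Δt)) :=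
    Metric.isClosed_closedBall.isComplete
  have hlip : LipschitzOnWith (1/2 : NNReal) Φ (closedBall uhat (C * Δt)) := by
    apply LipschitzOnWith.of_dist_le_mul
    intro x hx y hy
    rw [dist_eq_norm, dist_eq_norm]
    calc ‖Φ x - Φ y‖ ≤ (1 / 2) * ‖x - y‖ := hcontr x (hsub hx) y (hsub hy)
      _ = ((1/2 : NNReal) : ℝ) * ‖x - y‖ := by norm_num
  have hcontracting : ContractingWith (1/2 : NNReal) (hmaps.restrict Φ _ _) :=
    ⟨by rw [← NNReal.coe_lt_coe]; norm_num, hlip.mapsToRestrict hmaps⟩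
  obtain ⟨y, hys, hyfix, -, -⟩ :=
    hcontracting.exists_fixedPoint' hcomplete hmaps huhat_mem (edist_ne_top _ _)
  have hyΦ : Φ y = y := hyfix
  refine ⟨y, ⟨hys, (hiff y).mpr hyΦ⟩, ?_⟩
  rintro z ⟨hzs, hzfix⟩
  have hzΦ : Φ z = z := (hiff z).mp hzfix
  have h6 : ‖z - y‖ ≤ (1 / 2) * ‖z - y‖ := by
    have h7 := hcontr z (hsub hzs) y (hsub hys)
    rwa [hzΦ, hyΦ] at h7
  have h8 : ‖z - y‖ = 0 := by nlinarith [norm_nonneg (z - y)]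
  have := norm_eq_zero.mp h8
  exact sub_eq_zero.mp this
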